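/- Let a > 3/2, H ≥ 2, and s_1,…,s_H ≥ 0 real numbers with mean s̄ = H⁻¹ Σ_g s_g, and assume Σ_{g=1}^H (s_g − s̄)² > 0. Define δ_g = (2a + s_g)/(2a − 1), δ̄ = H⁻¹ Σ_g δ_g, and V_g = 2 (2a + s_g)² / ((2a − 1)² (2a − 3)). Then for every g = 1,…,H: δ̄ + [ 1 + ( H⁻¹ Σ_{g'} V_{g'} ) / ( (H − 1)⁻¹ Σ_{g'} (δ_{g'} − δ̄)² ) ]^{1/2} (δ_g − δ̄) = (2a − 1)⁻¹ { 2a + s̄ + (s_g − s̄) [ 1 + 8 (H − 1) ( a² + a s̄ + (4H)⁻¹ Σ_{g'} s_{g'}² ) / ( (2a − 3) Σ_{g'} (s_{g'} − s̄)² ) ]^{1/2} }. -/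

import Mathlib

open BigOperators

/-- Algebraic identity showing that the constrained Bayes estimator of the paper's
equation (4.5), built from the Bayes estimators `δ_g = (2a + s_g)/(2a-1)` and posterior
variances `V_g = 2(2a+s_g)²/((2a-1)²(2a-3))`, equals the closed form of equation (4.6). -/
theorem stmt_15 (a : ℝ) (ha : 3 / 2 < a) (H : ℕ) (hH : 2 ≤ H)
    (s : Fin H → ℝ) (hs : ∀ g, 0 ≤ s g)
    (hpos : 0 < ∑ g, (s g - (∑ g', s g') / H) ^ 2) :
    ∀ g : Fin H,
      (∑ g', (2 * a + s g') / (2 * a - 1)) / H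
        + Real.sqrt (1 +
            ((∑ g', 2 * (2 * a + s g') ^ 2 / ((2 * a - 1) ^ 2 * (2 * a - 3))) / H)
            / ((∑ g', ((2 * a + s g') / (2 * a - 1)
                  - (∑ g'', (2 * a + s g'') / (2 * a - 1)) / H) ^ 2) / ((H : ℝ) - 1)))
          * ((2 * a + s g) / (2 * a - 1) - (∑ g', (2 * a + s g') / (2 * a - 1)) / H)
      = (1 / (2 * a - 1)) *
          (2 * a + (∑ g', s g') / H
            + (s g - (∑ g', s g') / H)
              * Real.sqrt (1 +
                  8 * ((H : ℝ) - 1) * (a ^ 2 + a * ((∑ g', s g') / H)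
                      + (∑ g', (s g') ^ 2) / (4 * H))
                    / ((2 * a - 3) * ∑ g', (s g' - (∑ g'', s g'') / H) ^ 2))) := by
  intro g
  have hHpos : (0:ℝ) < H := by positivity
  have h1 : (2*a - 1) ≠ 0 := by nlinarith
  have h3 : (0:ℝ) < 2*a - 3 := by linarith
  have hH1 : (0:ℝ) < (H:ℝ) - 1 := by
    have : (2:ℝ) ≤ H := by exact_mod_cast hH
    linarith
  set Ssum := ∑ g', s g' with hSsum
  set T := ∑ g', (s g') ^ 2 with hT
  set Q := ∑ g', (s g' - Ssum / H) ^ 2 with hQ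
  have hsum : ∑ g'', (2 * a + s g'') / (2 * a - 1) = (2*a*H + Ssum) / (2*a - 1) := by
    rw [← Finset.sum_div, Finset.sum_add_distrib, Finset.sum_const, Finset.card_univ,
      Fintype.card_fin, nsmul_eq_mul]
    rw [hSsum]
    ring_nf
  have hdev : ∀ g' : Fin H, (2 * a + s g') / (2 * a - 1)
      - (∑ g'', (2 * a + s g'') / (2 * a - 1)) / H = (s g' - Ssum / H) / (2*a - 1) := by
    intro g'
    rw [hsum]
    field_simp
    ring
  have hQδ : ∑ g', ((2 * a + s g') / (2 * a - 1)
      - (∑ g'', (2 * a + s g'') / (2 * a - 1)) / H) ^ 2 = Q / (2*a-1)^2 := by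
    simp_rw [hdev, div_pow, ← Finset.sum_div]
    rw [hQ]
  have hV : ∑ g', 2 * (2 * a + s g') ^ 2 / ((2 * a - 1) ^ 2 * (2 * a - 3))
      = (4*a^2*H + 4*a*Ssum + T) * 2 / ((2*a-1)^2 * (2*a-3)) := by
    rw [← Finset.sum_div]
    congr 1
    have : ∀ g' : Fin H, 2 * (2*a + s g')^2 = 8*a^2 + 8*a * s g' + 2 * (s g')^2 := by
      intro g'; ring
    simp_rw [this, Finset.sum_add_distrib, Finset.sum_const, Finset.card_univ,
      Fintype.card_fin, nsmul_eq_mul, ← Finset.mul_sum]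
    ring
  have hargs : 1 + ((∑ g', 2 * (2 * a + s g') ^ 2 / ((2 * a - 1) ^ 2 * (2 * a - 3))) / H)
      / ((∑ g', ((2 * a + s g') / (2 * a - 1)
          - (∑ g'', (2 * a + s g'') / (2 * a - 1)) / H) ^ 2) / ((H : ℝ) - 1))
      = 1 + 8 * ((H : ℝ) - 1) * (a ^ 2 + a * (Ssum / H) + T / (4 * H))
          / ((2 * a - 3) * Q) := by
    rw [hQδ, hV]
    have hQ0 : Q ≠ 0 := ne_of_gt hpos
    have h3' : 2*a - 3 ≠ 0 := ne_of_gt h3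
    generalize hb : 2*a-1 = b at *
    have : 2*a - 3 = b - 2 := by rw [← hb]; ring
    rw [this] at *
    field_simp
    ring
  rw [hargs, hdev g, hsum]
  field_simp
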